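/- Let i, j ∈ ℕ with i − j ∈ 2ℕ+1 and set (r, r′) = (−ρ−i, −ρ′−j), so (r, r′) ∈ L_odd. Then: (i) every admissible solution t for (r, r′) satisfies t(α, α′) = 0 whenever α ≤ i or α′ > j; (ii) for every c ∈ ℂ there exists a unique admissible solution t for (r, r′) with t(i+1, j) = c. -/

import Mathlib

noncomputable section

/-- ρ = (n-1)/2 as a complex number. -/
def rho (n : ℕ) : ℂ := ((n : ℂ) - 1) / 2

/-- ρ' = (n-2)/2 as a complex number. -/
def rho' (n : ℕ) : ℂ := ((n : ℂ) - 2) / 2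

/-- A diagonal sequence for `(r, r')`. -/
def IsDiagSeq (n : ℕ) (r r' : ℂ) (s : ℕ → ℂ) : Prop :=
  ∀ α : ℕ, (2*r' + 2*(α : ℂ) + (n : ℂ) - 2) * s α
    = (2*r + 2*(α : ℂ) + (n : ℂ) - 1) * s (α + 1)

/-- L_even. -/
def Leven (n : ℕ) : Set (ℂ × ℂ) :=
  {p | ∃ i j : ℕ, p.1 = -rho n - (i : ℂ) ∧ p.2 = -rho' n - (j : ℂ) ∧ ∃ k : ℕ, i = j + 2*k}

/-- L_odd. -/
def Lodd (n : ℕ) : Set (ℂ × ℂ) :=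
  {p | ∃ i j : ℕ, p.1 = -rho n - (i : ℂ) ∧ p.2 = -rho' n - (j : ℂ) ∧ ∃ k : ℕ, i = j + 2*k + 1}

/-- An admissible solution `t : ℕ × ℕ → ℂ` for `(r, r')`:
`t(α,α') = 0` when `α' > α` or `α − α'` is odd (equivalently `α + α'` is odd),
and the relations (R1), (R2) hold for all `α ≥ α'` with `α − α'` even.
The natural-subtraction index `α - 1` is harmless, since in (R1) its coefficient
`(α − α')` vanishes when `α = α'`, and in (R2) we have `α ≥ α' ≥ 1`. -/
def IsAdmissible (n : ℕ) (r r' : ℂ) (t : ℕ → ℕ → ℂ) : Prop :=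
  (∀ α α' : ℕ, (α < α' ∨ Odd (α + α')) → t α α' = 0) ∧
  (∀ α α' : ℕ, α' ≤ α → Even (α + α') →
    ((2*(α : ℂ) + (n : ℂ) - 2) * (2*r' + 2*(α' : ℂ) + (n : ℂ) - 2) * t α α'
      = ((α : ℂ) + (α' : ℂ) + (n : ℂ) - 2) * (2*r + 2*(α : ℂ) + (n : ℂ) - 1)
          * t (α + 1) (α' + 1)
        + ((α : ℂ) - (α' : ℂ)) * (2*r - 2*(α : ℂ) - (n : ℂ) + 3)
          * t (α - 1) (α' + 1)) ∧
    (1 ≤ α' →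
      (2*(α : ℂ) + (n : ℂ) - 2) * (2*r' - 2*(α' : ℂ) - (n : ℂ) + 4) * t α α'
      = ((α : ℂ) - (α' : ℂ) + 1) * (2*r + 2*(α : ℂ) + (n : ℂ) - 1)
          * t (α + 1) (α' - 1)
        + ((α : ℂ) + (α' : ℂ) + (n : ℂ) - 3) * (2*r - 2*(α : ℂ) - (n : ℂ) + 3)
          * t (α - 1) (α' - 1)))

lemma nzC {x : ℤ} (h : x ≠ 0) : (x : ℂ) ≠ 0 := Int.cast_ne_zero.mpr h

lemma eqz {x z : ℂ} (hx : x ≠ 0) (h : x * z = 0) : z = 0 :=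
  (mul_eq_zero.mp h).resolve_left hx

section PartA

variable {n i j : ℕ} {t : ℕ → ℕ → ℂ}

variable (hn : 3 ≤ n) (hji : j < i) (hpar : (i + j) % 2 = 1)
variable (hsupp : ∀ a p : ℕ, (a < p ∨ (a + p) % 2 = 1) → t a p = 0)
variable (hR1 : ∀ a p : ℕ, p ≤ a → (a + p) % 2 = 0 →
  (2*(a:ℂ)+n-2)*((p:ℂ)-j) * t a p
    = ((a:ℂ)+p+n-2)*((a:ℂ)-i) * t (a+1) (p+1)
      - ((a:ℂ)-p)*((a:ℂ)+i+n-2) * t (a-1) (p+1))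
variable (hR2 : ∀ a q : ℕ, q ≤ a → (a + q) % 2 = 0 →
  -(2*(a:ℂ)+n)*((q:ℂ)+j+n-2) * t (a+1) (q+1)
    = ((a:ℂ)-q+1)*((a:ℂ)+1-i) * t (a+2) q
      - ((a:ℂ)+q+n-1)*((a:ℂ)+i+n-1) * t a q)

include hn hR1 hR2 in
lemma hE (a p : ℕ) (hpa : p ≤ a) (hev : (a + p) % 2 = 0) :
    ((a:ℂ)-p+1)*((p:ℂ)-j) * t (a+2) p + ((a:ℂ)+p+n)*((p:ℂ)+j+n-1) * t (a+2) (p+2)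
      = (2*(p:ℂ)+n-1)*((a:ℂ)+i+n) * t (a+1) (p+1) := by
  have h1 := hR1 (a+2) p (by omega) (by omega)
  have h2 := hR2 (a+1) (p+1) (by omega) (by omega)
  simp only [show a+2-1 = a+1 from rfl, show a+1+1 = a+2 from rfl,
    show a+1+2 = a+3 from rfl, show a+2+1 = a+3 from rfl] at h1 h2
  have hc : (2*(a:ℂ)+n+2) ≠ 0 := by
    have h := nzC (x := 2*(a:ℤ)+n+2) (by omega); push_cast at h; exact h
  apply mul_left_cancel₀ hc
  push_cast at h1 h2 ⊢
  linear_combination ((a:ℂ)-(p:ℂ)+1) * h1 - ((a:ℂ)+(p:ℂ)+(n:ℂ)) * h2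


include hn hji hR1 in
lemma Zdiag : ∀ m, j + 1 + m ≤ i → t (j+1+m) (j+1+m) = 0 := by
  intro m
  induction m with
  | zero =>
    intro hm
    have h := hR1 j j le_rfl (by omega)
    have h' : (((j:ℂ)+j+n-2)*((j:ℂ)-i)) * t (j+1) (j+1) = 0 := by
      linear_combination -h
    refine eqz (mul_ne_zero ?_ ?_) h'
    · have h := nzC (x := (j:ℤ)+j+n-2) (by omega); push_cast at h; exact h
    · have h := nzC (x := (j:ℤ)-i) (by omega); push_cast at h; exact h
  | succ m IH =>
    intro hm
    have ht : t (j+1+m) (j+1+m) = 0 := IH (by omega)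
    have h := hR1 (j+1+m) (j+1+m) le_rfl (by omega)
    push_cast at h
    have h' : ((((j:ℂ)+1+m)+((j:ℂ)+1+m)+n-2)*(((j:ℂ)+1+m)-i)) * t (j+1+m+1) (j+1+m+1) = 0 := by
      linear_combination -h + (2*((j:ℂ)+1+m)+n-2)*(((j:ℂ)+1+m)-j) * ht
    have h'' := eqz (mul_ne_zero ?_ ?_) h'
    · simpa [show j+1+(m+1) = j+1+m+1 from rfl] using h''
    · have h := nzC (x := ((j:ℤ)+1+m)+((j:ℤ)+1+m)+n-2) (by omega); push_cast at h ⊢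
      exact h
    · have h := nzC (x := ((j:ℤ)+1+m)-i) (by omega); push_cast at h ⊢
      exact h

include hn hji hpar hsupp hR1 hR2 in
lemma Zi : ∀ p, t i p = 0 := by
  have key : ∀ d p, i ≤ p + d → t i p = 0 := by
    intro d
    induction d with
    | zero =>
      intro p hp
      rcases Nat.lt_or_ge i p with h | h
      · exact hsupp i p (Or.inl h)
      · have : p = i := by omega
        subst this
        obtain ⟨m, hm⟩ : ∃ m, p = j + 1 + m := ⟨p - (j+1), by omega⟩
        rw [hm]; exact Zdiag hn hji hR1 m (by omega)
    | succ d IH =>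
      intro p hp
      by_cases hid : i ≤ p + d
      · exact IH p hid
      have hi : i = p + d + 1 := by omega
      by_cases hev : (i + p) % 2 = 0
      swap
      · exact hsupp i p (Or.inr (by omega))
      have hd1 : 1 ≤ d := by omega
      obtain ⟨a, ha⟩ : ∃ a, i = a + 2 := ⟨i - 2, by omega⟩
      have h2 : t i (p+2) = 0 := IH (p+2) (by omega)
      have hr2 := hR2 (a+1) (p+1) (by omega) (by omega)
      rw [ha] at h2 ⊢
      simp only [show a+1+1 = a+2 from rfl, show a+1+2 = a+3 from rfl,
        show p+1+1 = p+2 from rfl] at hr2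
      have hic : ((i:ℕ):ℂ) = (a:ℂ)+2 := by rw [ha]; push_cast; ring
      push_cast at hr2
      -- t (a+1) (p+1) = 0
      have h3 : t (a+1) (p+1) = 0 := by
        have h' : ((((a:ℂ))+(p:ℂ)+n+1)*(((a:ℂ))+(i:ℂ)+n)) * t (a+1) (p+1) = 0 := by
          linear_combination hr2 + (2*(a:ℂ)+n+2)*((p:ℂ)+j+n-1) * h2
            - ((a:ℂ)-(p:ℂ)+1) * (t (a+3) (p+1)) * hic
        refine eqz (mul_ne_zero ?_ ?_) h'
        · have h := nzC (x := (a:ℤ)+p+n+1) (by omega); push_cast at h ⊢; exact h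
        · have h := nzC (x := (a:ℤ)+i+n) (by omega); push_cast at h ⊢; exact h
      have hEa := hE hn hR1 hR2 a p (by omega) (by omega)
      have h' : (((a:ℂ)-p+1)*((p:ℂ)-j)) * t (a+2) p = 0 := by
        linear_combination hEa - ((a:ℂ)+p+n)*((p:ℂ)+j+n-1) * h2
          + (2*(p:ℂ)+n-1)*((a:ℂ)+i+n) * h3
      refine eqz (mul_ne_zero ?_ ?_) h'
      · have h := nzC (x := (a:ℤ)-p+1) (by omega); push_cast at h; exact h
      · have h := nzC (x := (p:ℤ)-j) (by omega); push_cast at h; exact h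
  exact fun p => key i p (by omega)


include hn hji hpar hsupp hR1 hR2 in
lemma Ztri : ∀ A p, A ≤ i → t A p = 0 := by
  have key : ∀ d A p, i ≤ A + d → A ≤ i → t A p = 0 := by
    intro d
    induction d with
    | zero => intro A p h1 h2; have : A = i := by omega
              subst this; exact Zi hn hji hpar hsupp hR1 hR2 p
    | succ d IH =>
      intro A q h1 h2
      by_cases hid : i ≤ A + d
      · exact IH A q hid h2
      have hAd : i = A + d + 1 := by omega
      by_cases hev : (A + q) % 2 = 0
      swap
      · exact hsupp A q (Or.inr (by omega))
      by_cases hAq : q ≤ A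
      swap
      · exact hsupp A q (Or.inl (by omega))
      have hr2 := hR2 A q hAq (by omega)
      have hz1 : t (A+1) (q+1) = 0 := IH (A+1) (q+1) (by omega) (by omega)
      by_cases hA2 : A + 2 ≤ i
      · have hz2 : t (A+2) q = 0 := IH (A+2) q (by omega) hA2
        have h' : (((A:ℂ)+q+n-1)*((A:ℂ)+i+n-1)) * t A q = 0 := by
          linear_combination hr2 + (2*(A:ℂ)+n)*((q:ℂ)+j+n-2) * hz1
            + ((A:ℂ)-q+1)*((A:ℂ)+1-i) * hz2
        refine eqz (mul_ne_zero ?_ ?_) h'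
        · have h := nzC (x := (A:ℤ)+q+n-1) (by omega); push_cast at h ⊢; exact h
        · have h := nzC (x := (A:ℤ)+i+n-1) (by omega); push_cast at h ⊢; exact h
      · -- A + 1 = i
        have hic : ((i:ℕ):ℂ) = (A:ℂ)+1 := by
          have : i = A+1 := by omega
          rw [this]; push_cast; ring
        have h' : (((A:ℂ)+q+n-1)*((A:ℂ)+i+n-1)) * t A q = 0 := by
          linear_combination hr2 + (2*(A:ℂ)+n)*((q:ℂ)+j+n-2) * hz1
            - ((A:ℂ)-(q:ℂ)+1) * (t (A+2) q) * hic
        refine eqz (mul_ne_zero ?_ ?_) h'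
        · have h := nzC (x := (A:ℤ)+q+n-1) (by omega); push_cast at h ⊢; exact h
        · have h := nzC (x := (A:ℤ)+i+n-1) (by omega); push_cast at h ⊢; exact h
  exact fun A p hA => key i A p (by omega) hA

include hn hji hpar hsupp hR1 hR2 in
lemma Zcol1 : ∀ m, t (i+1) (j+2+2*m) = 0 := by
  have hi1 : ∃ a, i = a + 1 := ⟨i - 1, by omega⟩
  obtain ⟨a, ha⟩ := hi1
  intro m
  induction m with
  | zero =>
    have hEa := hE hn hR1 hR2 a j (by omega) (by omega)
    have hz : t (a+1) (j+1) = 0 := Ztri hn hji hpar hsupp hR1 hR2 (a+1) (j+1) (by omega)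
    have h' : (((a:ℂ)+j+n)*((j:ℂ)+j+n-1)) * t (a+2) (j+2) = 0 := by
      linear_combination hEa + (2*(j:ℂ)+n-1)*((a:ℂ)+i+n) * hz
    have h'' := eqz (mul_ne_zero ?_ ?_) h'
    · have e1 : i+1 = a+2 := by omega
      have e2 : j+2+2*0 = j+2 := by omega
      rw [e1, e2]; exact h''
    · have h := nzC (x := (a:ℤ)+j+n) (by omega); push_cast at h ⊢; exact h
    · have h := nzC (x := (j:ℤ)+j+n-1) (by omega); push_cast at h ⊢; exact h
  | succ m IH =>
    by_cases hbig : i + 1 < j+2+2*(m+1)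
    · exact hsupp _ _ (Or.inl hbig)
    have hple : j+2+2*m ≤ a := by omega
    have hEa := hE hn hR1 hR2 a (j+2+2*m) hple (by omega)
    have hz : t (a+1) (j+2+2*m+1) = 0 :=
      Ztri hn hji hpar hsupp hR1 hR2 (a+1) _ (by omega)
    rw [show (a:ℕ)+2 = i+1 by omega] at hEa
    push_cast at hEa
    have h' : ((((a:ℂ))+((j:ℂ)+2+2*m)+n)*(((j:ℂ)+2+2*m)+j+n-1)) * t (i+1) (j+2+2*m+2) = 0 := by
      linear_combination hEa + (2*((j:ℂ)+2+2*m)+n-1)*((a:ℂ)+i+n) * hz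
        - ((a:ℂ)-((j:ℂ)+2+2*m)+1)*(((j:ℂ)+2+2*m)-j) * IH
    have h'' := eqz (mul_ne_zero ?_ ?_) h'
    · rw [show j+2+2*(m+1) = j+2+2*m+2 by omega]; exact h''
    · have h := nzC (x := (a:ℤ)+(j+2+2*m)+n) (by omega); push_cast at h ⊢; exact h
    · have h := nzC (x := ((j:ℤ)+2+2*m)+j+n-1) (by omega); push_cast at h ⊢; exact h

include hn hji hpar hsupp hR1 hR2 in
lemma Zrows : ∀ A q, j < q → t A q = 0 := by
  intro A
  induction A using Nat.strong_induction_on with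
  | _ A IH =>
  intro q hq
  by_cases hAi : A ≤ i
  · exact Ztri hn hji hpar hsupp hR1 hR2 A q hAi
  by_cases hev : (A + q) % 2 = 0
  swap
  · exact hsupp A q (Or.inr (by omega))
  by_cases hqA : A < q
  · exact hsupp A q (Or.inl hqA)
  by_cases hA1 : A = i + 1
  · subst hA1
    obtain ⟨m, hm⟩ : ∃ m, q = j+2+2*m := ⟨(q - j - 2)/2, by omega⟩
    rw [hm]; exact Zcol1 hn hji hpar hsupp hR1 hR2 m
  -- A ≥ i + 2
  obtain ⟨b, rfl⟩ : ∃ b, A = b + 2 := ⟨A - 2, by omega⟩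
  by_cases hdiag : q = b + 2
  · subst hdiag
    have h := hR1 (b+1) (b+1) le_rfl (by omega)
    have hz : t (b+1) (b+1) = 0 := IH (b+1) (by omega) (b+1) (by omega)
    simp only [show b+1+1 = b+2 from rfl] at h
    push_cast at h
    have h' : ((((b:ℂ)+1)+(b+1)+n-2)*(((b:ℂ)+1)-i)) * t (b+2) (b+2) = 0 := by
      linear_combination -h + (2*((b:ℂ)+1)+n-2)*(((b:ℂ)+1)-j) * hz
    refine eqz (mul_ne_zero ?_ ?_) h'
    · have h := nzC (x := ((b:ℤ)+1)+(b+1)+n-2) (by omega); push_cast at h ⊢; exact h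
    · have h := nzC (x := ((b:ℤ)+1)-i) (by omega); push_cast at h ⊢; exact h
  have hqb : q ≤ b := by omega
  have hr2 := hR2 b q hqb (by omega)
  have hz1 : t (b+1) (q+1) = 0 := IH (b+1) (by omega) (q+1) (by omega)
  have hz2 : t b q = 0 := IH b (by omega) q hq
  have h' : (((b:ℂ)-q+1)*((b:ℂ)+1-i)) * t (b+2) q = 0 := by
    linear_combination -hr2 - (2*(b:ℂ)+n)*((q:ℂ)+j+n-2) * hz1
      + ((b:ℂ)+q+n-1)*((b:ℂ)+i+n-1) * hz2
  refine eqz (mul_ne_zero ?_ ?_) h'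
  · have h := nzC (x := (b:ℤ)-q+1) (by omega); push_cast at h ⊢; exact h
  · have h := nzC (x := (b:ℤ)+1-i) (by omega); push_cast at h ⊢; exact h

include hn hji hpar hsupp hR1 hR2 in
lemma Uzero (hz0 : t (i+1) j = 0) : ∀ A q, t A q = 0 := by
  have hcoldown : ∀ m q, j = q + 2*m → t (i+1) q = 0 := by
    intro m
    induction m with
    | zero => intro q hq; have : q = j := by omega
              subst this; exact hz0
    | succ m IH =>
      intro q hq
      obtain ⟨a, ha⟩ : ∃ a, i = a + 1 := ⟨i - 1, by omega⟩
      have h2 : t (i+1) (q+2) = 0 := IH (q+2) (by omega)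
      have hEa := hE hn hR1 hR2 a q (by omega) (by omega)
      have hz : t (a+1) (q+1) = 0 := Ztri hn hji hpar hsupp hR1 hR2 (a+1) (q+1) (by omega)
      rw [show (a:ℕ)+2 = i+1 by omega] at hEa
      have h' : (((a:ℂ)-q+1)*((q:ℂ)-j)) * t (i+1) q = 0 := by
        linear_combination hEa + (2*(q:ℂ)+n-1)*((a:ℂ)+i+n) * hz
          - ((a:ℂ)+q+n)*((q:ℂ)+j+n-1) * h2
      refine eqz (mul_ne_zero ?_ ?_) h'
      · have h := nzC (x := (a:ℤ)-q+1) (by omega); push_cast at h ⊢; exact h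
      · have h := nzC (x := (q:ℤ)-j) (by omega); push_cast at h ⊢; exact h
  have hcol : ∀ q, t (i+1) q = 0 := by
    intro q
    rcases Nat.lt_or_ge j q with h | h
    · exact Zrows hn hji hpar hsupp hR1 hR2 (i+1) q h
    by_cases hev : (i + 1 + q) % 2 = 0
    swap
    · exact hsupp (i+1) q (Or.inr (by omega))
    exact hcoldown ((j - q)/2) q (by omega)
  intro A
  induction A using Nat.strong_induction_on with
  | _ A IH =>
  intro q
  by_cases hAi : A ≤ i
  · exact Ztri hn hji hpar hsupp hR1 hR2 A q hAi
  by_cases hA1 : A = i + 1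
  · subst hA1; exact hcol q
  obtain ⟨b, rfl⟩ : ∃ b, A = b + 2 := ⟨A - 2, by omega⟩
  by_cases hq : j < q
  · exact Zrows hn hji hpar hsupp hR1 hR2 (b+2) q hq
  by_cases hev : (b + q) % 2 = 0
  swap
  · exact hsupp (b+2) q (Or.inr (by omega))
  have hr2 := hR2 b q (by omega) hev
  have hz1 : t (b+1) (q+1) = 0 := IH (b+1) (by omega) (q+1)
  have hz2 : t b q = 0 := IH b (by omega) q
  have h' : (((b:ℂ)-q+1)*((b:ℂ)+1-i)) * t (b+2) q = 0 := by
    linear_combination -hr2 - (2*(b:ℂ)+n)*((q:ℂ)+j+n-2) * hz1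
      + ((b:ℂ)+q+n-1)*((b:ℂ)+i+n-1) * hz2
  refine eqz (mul_ne_zero ?_ ?_) h'
  · have h := nzC (x := (b:ℤ)-q+1) (by omega); push_cast at h ⊢; exact h
  · have h := nzC (x := (b:ℤ)+1-i) (by omega); push_cast at h ⊢; exact h

end PartA

section PartB

def colSeq (n i j : ℕ) (c : ℂ) : ℕ → ℂ
  | 0 => c
  | m+1 => (((i:ℂ)+(j:ℂ)+(n:ℂ)-3-2*(m:ℂ)) * (2*(j:ℂ)+(n:ℂ)-3-2*(m:ℂ))) /
      ((((i:ℂ))-(j:ℂ)+2+2*(m:ℂ)) * (2*(m:ℂ)+2)) * colSeq n i j c m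

def colFun (n i j : ℕ) (c : ℂ) (p : ℕ) : ℂ :=
  if p ≤ j ∧ (j - p) % 2 = 0 then colSeq n i j c ((j - p)/2) else 0

def newcol (n i j : ℕ) (a : ℕ) (t2 t1 : ℕ → ℂ) (p : ℕ) : ℂ :=
  if (a + p) % 2 = 1 ∨ j < p then 0
  else (((a:ℂ)+(p:ℂ)+(n:ℂ)-3)*((a:ℂ)+(i:ℂ)+(n:ℂ)-3) * t2 p
        - (2*(a:ℂ)+(n:ℂ)-4)*((p:ℂ)+(j:ℂ)+(n:ℂ)-2) * t1 (p+1))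
       / (((a:ℂ)-(p:ℂ)-1)*((a:ℂ)-1-(i:ℂ)))

def tPair (n i j : ℕ) (c : ℂ) : ℕ → ((ℕ → ℂ) × (ℕ → ℂ))
  | 0 => (fun _ => 0, fun _ => 0)
  | a+1 => ((tPair n i j c a).2,
      if a + 2 ≤ i then fun _ => 0
      else if a + 2 = i + 1 then colFun n i j c
      else newcol n i j (a+2) (tPair n i j c a).1 (tPair n i j c a).2)

def tsol (n i j : ℕ) (c : ℂ) (a : ℕ) : ℕ → ℂ := (tPair n i j c a).1

variable {n i j : ℕ} {c : ℂ}
variable (hn : 3 ≤ n) (hji : j < i) (hpar : (i + j) % 2 = 1)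

lemma tsol_two (a : ℕ) : tsol n i j c (a+2) =
    if a + 2 ≤ i then (fun _ => 0)
    else if a + 2 = i + 1 then colFun n i j c
    else newcol n i j (a+2) (tsol n i j c a) (tsol n i j c (a+1)) := rfl

include hji hpar in
lemma tsol_vanish (a p : ℕ) (h : a ≤ i ∨ j < p ∨ (a + p) % 2 = 1) :
    tsol n i j c a p = 0 := by
  match a with
  | 0 => rfl
  | 1 => rfl
  | (A+2) =>
    rw [tsol_two]
    split_ifs with h1 h2
    · rfl
    · simp only [colFun]
      rw [if_neg]
      omega
    · simp only [newcol]
      rw [if_pos]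
      omega

include hji in
lemma tsol_colfun : tsol n i j c (i+1) = colFun n i j c := by
  obtain ⟨e, he⟩ : ∃ e, i = e + 1 := ⟨i - 1, by omega⟩
  subst he
  rw [show e+1+1 = e+2 from rfl, tsol_two, if_neg (by omega), if_pos (by omega)]

lemma colSeq_succ (m : ℕ) : colSeq n i j c (m+1) =
    (((i:ℂ)+(j:ℂ)+(n:ℂ)-3-2*(m:ℂ)) * (2*(j:ℂ)+(n:ℂ)-3-2*(m:ℂ))) /
      ((((i:ℂ))-(j:ℂ)+2+2*(m:ℂ)) * (2*(m:ℂ)+2)) * colSeq n i j c m := rfl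

include hji hpar in
lemma col_identity (p : ℕ) :
    ((i:ℂ)-(p:ℂ))*((p:ℂ)-(j:ℂ)) * tsol n i j c (i+1) p
      + ((i:ℂ)+(p:ℂ)+(n:ℂ)-1)*((p:ℂ)+(j:ℂ)+(n:ℂ)-1) * tsol n i j c (i+1) (p+2) = 0 := by
  rw [tsol_colfun hji]
  by_cases h1 : j < p
  · have e1 : colFun n i j c p = 0 := by simp only [colFun]; rw [if_neg]; omega
    have e2 : colFun n i j c (p+2) = 0 := by simp only [colFun]; rw [if_neg]; omega
    rw [e1, e2]; ring
  by_cases h2 : p = j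
  · have e2 : colFun n i j c (p+2) = 0 := by simp only [colFun]; rw [if_neg]; omega
    have hc : (p:ℂ) = (j:ℂ) := by rw [h2]
    rw [e2]
    linear_combination ((i:ℂ)-(p:ℂ)) * (colFun n i j c p) * hc
  by_cases h3 : (j - p) % 2 = 1
  · have e1 : colFun n i j c p = 0 := by simp only [colFun]; rw [if_neg]; omega
    have e2 : colFun n i j c (p+2) = 0 := by simp only [colFun]; rw [if_neg]; omega
    rw [e1, e2]; ring
  -- p < j, j - p even hence ≥ 2
  obtain ⟨m, hm⟩ : ∃ m, j = p + 2*m + 2 := ⟨(j - p)/2 - 1, by omega⟩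
  have e1 : colFun n i j c p = colSeq n i j c (m+1) := by
    simp only [colFun]; rw [if_pos (by omega)]
    congr 1; omega
  have e2 : colFun n i j c (p+2) = colSeq n i j c m := by
    simp only [colFun]; rw [if_pos (by omega)]
    congr 1; omega
  rw [e1, e2, colSeq_succ]
  have hc : (j:ℂ) = (p:ℂ)+2*m+2 := by rw [hm]; push_cast; ring
  rw [hc]
  have hd1 : ((i:ℂ)-((p:ℂ)+2*(m:ℂ)+2)+2+2*(m:ℂ)) ≠ 0 := by
    have h := nzC (x := (i:ℤ)-((p:ℤ)+2*m+2)+2+2*m) (by omega); push_cast at h ⊢; exact h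
  have hd2 : (2*(m:ℂ)+2) ≠ 0 := by
    have h := nzC (x := 2*(m:ℤ)+2) (by omega); push_cast at h ⊢; exact h
  field_simp
  ring

include hn hji hpar in
lemma tsol_R2 (a q : ℕ) :
    -(2*(a:ℂ)+n)*((q:ℂ)+j+n-2) * tsol n i j c (a+1) (q+1)
      = ((a:ℂ)-q+1)*((a:ℂ)+1-i) * tsol n i j c (a+2) q
        - ((a:ℂ)+q+n-1)*((a:ℂ)+i+n-1) * tsol n i j c a q := by
  by_cases hai : a < i
  · have h1 : tsol n i j c (a+1) (q+1) = 0 := tsol_vanish hji hpar _ _ (by omega)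
    have h2 : tsol n i j c a q = 0 := tsol_vanish hji hpar _ _ (by omega)
    by_cases ha2 : a + 2 ≤ i
    · have h3 : tsol n i j c (a+2) q = 0 := tsol_vanish hji hpar _ _ (by omega)
      rw [h1, h2, h3]; ring
    · have hic : ((i:ℕ):ℂ) = (a:ℂ)+1 := by
        have : i = a+1 := by omega
        rw [this]; push_cast; ring
      rw [h1, h2, hic]; ring
  · by_cases hq : (a + q) % 2 = 1 ∨ j < q
    · have h1 : tsol n i j c (a+1) (q+1) = 0 := tsol_vanish hji hpar _ _ (by omega)
      have h2 : tsol n i j c a q = 0 := tsol_vanish hji hpar _ _ (by omega)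
      have h3 : tsol n i j c (a+2) q = 0 := tsol_vanish hji hpar _ _ (by omega)
      rw [h1, h2, h3]; ring
    · have ht : tsol n i j c (a+2) = newcol n i j (a+2) (tsol n i j c a) (tsol n i j c (a+1)) := by
        rw [tsol_two, if_neg (by omega), if_neg (by omega)]
      rw [ht]
      simp only [newcol]
      rw [if_neg (by omega)]
      have hd1 : (((a:ℂ)+2)-(q:ℂ)-1) ≠ 0 := by
        have h := nzC (x := ((a:ℤ)+2)-q-1) (by omega); push_cast at h ⊢; exact h
      have hd2 : (((a:ℂ)+2)-1-(i:ℂ)) ≠ 0 := by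
        have h := nzC (x := ((a:ℤ)+2)-1-i) (by omega); push_cast at h ⊢; exact h
      push_cast
      field_simp
      ring

include hn hji hpar in
lemma tsol_E : ∀ a : ℕ, ∀ p : ℕ, (a + p) % 2 = 0 →
    ((a:ℂ)-p+1)*((p:ℂ)-j) * tsol n i j c (a+2) p
      + ((a:ℂ)+p+n)*((p:ℂ)+j+n-1) * tsol n i j c (a+2) (p+2)
      = (2*(p:ℂ)+n-1)*((a:ℂ)+i+n) * tsol n i j c (a+1) (p+1) := by
  intro a
  induction a using Nat.strong_induction_on with
  | _ a IH =>
  intro p hev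
  by_cases h1 : a + 2 ≤ i
  · have z1 : tsol n i j c (a+2) p = 0 := tsol_vanish hji hpar _ _ (by omega)
    have z2 : tsol n i j c (a+2) (p+2) = 0 := tsol_vanish hji hpar _ _ (by omega)
    have z3 : tsol n i j c (a+1) (p+1) = 0 := tsol_vanish hji hpar _ _ (by omega)
    rw [z1, z2, z3]; ring
  by_cases h2 : a + 2 = i + 1
  · have hz : tsol n i j c (a+1) (p+1) = 0 := tsol_vanish hji hpar _ _ (by omega)
    have hcol := col_identity (n := n) (c := c) hji hpar p
    rw [show i+1 = a+2 by omega] at hcol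
    have hc : ((i:ℕ):ℂ) = (a:ℂ)+1 := by
      have : i = a+1 := by omega
      rw [this]; push_cast; ring
    rw [hc] at hcol ⊢
    rw [hz]
    linear_combination hcol
  by_cases h3 : j ≤ p
  · have z2 : tsol n i j c (a+2) (p+2) = 0 := tsol_vanish hji hpar _ _ (by omega)
    have z3 : tsol n i j c (a+1) (p+1) = 0 := tsol_vanish hji hpar _ _ (by omega)
    rw [z2, z3]
    by_cases h4 : p = j
    · have hc : (p:ℂ) = (j:ℂ) := by rw [h4]
      linear_combination ((a:ℂ)-(p:ℂ)+1) * (tsol n i j c (a+2) p) * hc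
    · have z1 : tsol n i j c (a+2) p = 0 := tsol_vanish hji hpar _ _ (by omega)
      rw [z1]; ring
  -- main case : p < j and a ≥ i
  obtain ⟨e, rfl⟩ : ∃ e, a = e + 2 := ⟨a - 2, by omega⟩
  have hd1 := tsol_R2 hn hji hpar (c := c) (e+2) p
  have hd2 := tsol_R2 hn hji hpar (c := c) (e+2) (p+2)
  have hd3 := tsol_R2 hn hji hpar (c := c) (e+1) (p+1)
  have ih1 := IH (e+1) (by omega) (p+1) (by omega)
  have ih2 := IH e (by omega) p (by omega)
  simp only [show e+2+1 = e+3 from rfl, show e+2+2 = e+4 from rfl,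
    show e+1+1 = e+2 from rfl, show e+1+2 = e+3 from rfl,
    show p+1+1 = p+2 from rfl, show p+1+2 = p+3 from rfl,
    show p+2+1 = p+3 from rfl] at hd1 hd2 hd3 ih1 ih2 ⊢
  push_cast at hd1 hd2 hd3 ih1 ih2 ⊢
  have hM1 : ((e:ℂ)-(p:ℂ)+1) ≠ 0 := by
    have h := nzC (x := (e:ℤ)-p+1) (by omega); push_cast at h ⊢; exact h
  have hM2 : ((e:ℂ)+3-(i:ℂ)) ≠ 0 := by
    have h := nzC (x := (e:ℤ)+3-i) (by omega); push_cast at h ⊢; exact h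
  apply mul_left_cancel₀ (mul_ne_zero hM1 hM2)
  linear_combination ((j:ℂ)-p)*((e:ℂ)-p+1) * hd1
    - ((e:ℂ)+p+n+2)*((p:ℂ)+j+n-1) * hd2
    + ((e:ℂ)+i+n+1)*(2*(p:ℂ)+n-1) * hd3
    - (2*(e:ℂ)+n+4)*((p:ℂ)+j+n-1) * ih1
    + ((e:ℂ)+i+n+1)*((e:ℂ)+p+n+1) * ih2

include hn hji hpar in
lemma tsol_R1 (A p : ℕ) (hev : (A + p) % 2 = 0) :
    (2*(A:ℂ)+n-2)*((p:ℂ)-j) * tsol n i j c A p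
      = ((A:ℂ)+p+n-2)*((A:ℂ)-i) * tsol n i j c (A+1) (p+1)
        - ((A:ℂ)-p)*((A:ℂ)+i+n-2) * tsol n i j c (A-1) (p+1) := by
  by_cases hAi : A ≤ i
  · have z1 : tsol n i j c A p = 0 := tsol_vanish hji hpar _ _ (by omega)
    have z3 : tsol n i j c (A-1) (p+1) = 0 := tsol_vanish hji hpar _ _ (by omega)
    rw [z1, z3]
    by_cases h4 : A = i
    · have hc : (A:ℂ) = (i:ℂ) := by rw [h4]
      linear_combination (-((A:ℂ)+(p:ℂ)+(n:ℂ)-2)) * (tsol n i j c (A+1) (p+1)) * hc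
    · have z2 : tsol n i j c (A+1) (p+1) = 0 := tsol_vanish hji hpar _ _ (by omega)
      rw [z2]; ring
  by_cases hjp : j ≤ p
  · have z2 : tsol n i j c (A+1) (p+1) = 0 := tsol_vanish hji hpar _ _ (by omega)
    have z3 : tsol n i j c (A-1) (p+1) = 0 := tsol_vanish hji hpar _ _ (by omega)
    rw [z2, z3]
    by_cases h4 : p = j
    · have hc : (p:ℂ) = (j:ℂ) := by rw [h4]
      linear_combination (2*(A:ℂ)+(n:ℂ)-2) * (tsol n i j c A p) * hc
    · have z1 : tsol n i j c A p = 0 := tsol_vanish hji hpar _ _ (by omega)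
      rw [z1]; ring
  -- A ≥ i+1, p < j
  obtain ⟨e, rfl⟩ : ∃ e, A = e + 2 := ⟨A - 2, by omega⟩
  have hEL := tsol_E hn hji hpar (c := c) e p (by omega)
  have hd := tsol_R2 hn hji hpar (c := c) (e+1) (p+1)
  simp only [show e+2-1 = e+1 from rfl, show e+2+1 = e+3 from rfl,
    show e+1+1 = e+2 from rfl, show e+1+2 = e+3 from rfl,
    show p+1+1 = p+2 from rfl] at hEL hd ⊢
  push_cast at hEL hd ⊢
  have hM1 : ((e:ℂ)-(p:ℂ)+1) ≠ 0 := by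
    have h := nzC (x := (e:ℤ)-p+1) (by omega); push_cast at h ⊢; exact h
  apply mul_left_cancel₀ hM1
  linear_combination (2*(e:ℂ)+n+2) * hEL + ((e:ℂ)+p+n) * hd

include hji in
lemma tsol_val : tsol n i j c (i+1) j = c := by
  rw [tsol_colfun hji]
  simp only [colFun]
  rw [if_pos (by omega)]
  simp only [Nat.sub_self, Nat.zero_div]
  rfl

end PartB

section Assemble

variable {n i j : ℕ} (hn : 3 ≤ n) (hji : j < i) (hpar : (i + j) % 2 = 1)
variable {r r' : ℂ} (hr : r = -rho n - (i : ℂ)) (hr' : r' = -rho' n - (j : ℂ))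

include hr hr' in
lemma extract_props {t : ℕ → ℕ → ℂ} (ht : IsAdmissible n r r' t) :
    (∀ a p : ℕ, (a < p ∨ (a + p) % 2 = 1) → t a p = 0) ∧
    (∀ a p : ℕ, p ≤ a → (a + p) % 2 = 0 →
      (2*(a:ℂ)+n-2)*((p:ℂ)-j) * t a p
        = ((a:ℂ)+p+n-2)*((a:ℂ)-i) * t (a+1) (p+1)
          - ((a:ℂ)-p)*((a:ℂ)+i+n-2) * t (a-1) (p+1)) ∧
    (∀ a q : ℕ, q ≤ a → (a + q) % 2 = 0 →
      -(2*(a:ℂ)+n)*((q:ℂ)+j+n-2) * t (a+1) (q+1)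
        = ((a:ℂ)-q+1)*((a:ℂ)+1-i) * t (a+2) q
          - ((a:ℂ)+q+n-1)*((a:ℂ)+i+n-1) * t a q) := by
  subst hr hr'
  refine ⟨?_, ?_, ?_⟩
  · intro a p h
    refine ht.1 a p ?_
    rcases h with h | h
    · exact Or.inl h
    · exact Or.inr (Nat.odd_iff.mpr h)
  · intro a p hpa hev
    have h := (ht.2 a p hpa (Nat.even_iff.mpr hev)).1
    rw [rho, rho'] at h
    push_cast at h ⊢
    linear_combination h / 2
  · intro a q hqa hev
    have h := (ht.2 (a+1) (q+1) (by omega) (Nat.even_iff.mpr (by omega))).2 (by omega)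
    simp only [show a+1+1 = a+2 from rfl, show q+1-1 = q from rfl,
      show a+1-1 = a from rfl] at h
    rw [rho, rho'] at h
    push_cast at h ⊢
    linear_combination h / 2

include hn hji hpar hr hr' in
lemma tsol_admissible : IsAdmissible n r r' (tsol n i j c) := by
  constructor
  · intro a p h
    refine tsol_vanish hji hpar a p ?_
    rcases h with h | h
    · omega
    · right; right; exact Nat.odd_iff.mp h
  · intro a p hpa hev
    subst hr hr'
    constructor
    · have h := tsol_R1 (c := c) hn hji hpar a p (Nat.even_iff.mp hev)
      rw [rho, rho']
      push_cast
      linear_combination 2 * h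
    · intro hp1
      obtain ⟨q, rfl⟩ : ∃ q, p = q + 1 := ⟨p - 1, by omega⟩
      obtain ⟨b, rfl⟩ : ∃ b, a = b + 1 := ⟨a - 1, by omega⟩
      have h := tsol_R2 (c := c) hn hji hpar b q
      simp only [show b+1+1 = b+2 from rfl, show q+1-1 = q from rfl,
        show b+1-1 = b from rfl]
      rw [rho, rho']
      push_cast
      linear_combination 2 * h

end Assemble


set_option linter.unusedSectionVars false in
theorem statement4 (n : ℕ) (hn : 3 ≤ n) (i j : ℕ) (hij : ∃ k : ℕ, i = j + 2*k + 1)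
    (r r' : ℂ) (hr : r = -rho n - (i : ℂ)) (hr' : r' = -rho' n - (j : ℂ)) :
    (∀ t : ℕ → ℕ → ℂ, IsAdmissible n r r' t →
      ∀ α α' : ℕ, (α ≤ i ∨ j < α') → t α α' = 0) ∧
    (∀ c : ℂ, ∃! t : ℕ → ℕ → ℂ, IsAdmissible n r r' t ∧ t (i + 1) j = c) := by
  obtain ⟨k, hk⟩ := hij
  have hji : j < i := by omega
  have hpar : (i + j) % 2 = 1 := by omega
  constructor
  · intro t ht α α' hc
    obtain ⟨hsupp, hR1, hR2⟩ := extract_props hr hr' ht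
    rcases hc with hc | hc
    · exact Ztri hn hji hpar hsupp hR1 hR2 α α' hc
    · exact Zrows hn hji hpar hsupp hR1 hR2 α α' hc
  · intro c
    refine ⟨tsol n i j c, ⟨tsol_admissible hn hji hpar hr hr', tsol_val hji⟩, ?_⟩
    rintro y ⟨hy, hyv⟩
    obtain ⟨hys, hy1, hy2⟩ := extract_props hr hr' hy
    obtain ⟨hts, ht1, ht2⟩ :=
      extract_props hr hr' (tsol_admissible (c := c) hn hji hpar hr hr')
    have hz : ∀ A q, y A q - tsol n i j c A q = 0 := by
      have := Uzero (t := fun a p => y a p - tsol n i j c a p) hn hji hpar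
        (fun a p h => by rw [hys a p h, hts a p h]; ring)
        (fun a p h1 h2 => by
                             linear_combination hy1 a p h1 h2 - ht1 a p h1 h2)
        (fun a q h1 h2 => by
                             linear_combination hy2 a q h1 h2 - ht2 a q h1 h2)
        (by rw [hyv, tsol_val hji]; ring)
      intro A q
      exact this A q
    funext a p
    exact sub_eq_zero.mp (hz a p)


end
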